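/- Let X be a metric space, (Xₙ) a sequence of X-valued random variables and X₀ a random variable such that every pair of subsequences (X_{n_k}, X_{m_k}) has a further subsequence whose joint law converges weakly to a measure supported on the diagonal {(x,x) : x ∈ X} of X × X. If moreover the laws of (Xₙ) are tight, then (Xₙ) converges in probability (along the whole sequence it is Cauchy in probability) to some X-valued random variable. -/

import Mathlib

open MeasureTheory Filter
open scoped ENNReal Topology


open OmegaCompletePartialOrder in
/-- For a monotone sequence of measures, the supremum measure evaluates pointwise on
measurable sets. -/
lemma gk_iSup_apply {α : Type*} [MeasurableSpace α] {μ : ℕ → Measure α}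
    (hm : Monotone μ) {s : Set α} (hs : MeasurableSet s) :
    (⨆ n, μ n) s = ⨆ n, μ n s := by
  classical
  have swap : ∀ g : ℕ → Set α, (∑' i, ⨆ n, μ n (g i)) = ⨆ n, ∑' i, μ n (g i) := by
    intro g
    calc (∑' i, ⨆ n, μ n (g i)) = ⨆ F : Finset ℕ, ∑ i ∈ F, ⨆ n, μ n (g i) :=
          ENNReal.tsum_eq_iSup_sum
      _ = ⨆ F : Finset ℕ, ⨆ n, ∑ i ∈ F, μ n (g i) := by
          refine iSup_congr fun F => ?_
          exact ENNReal.finsetSum_iSup_of_monotone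
            (fun i a b hab => Measure.le_iff'.1 (hm hab) (g i))
      _ = ⨆ n, ⨆ F : Finset ℕ, ∑ i ∈ F, μ n (g i) := iSup_comm
      _ = ⨆ n, ∑' i, μ n (g i) := by
          exact iSup_congr fun n => ENNReal.tsum_eq_iSup_sum.symm
  set ν : Measure α := Measure.ofMeasurable (fun t _ => ⨆ n, μ n t)
    (by simp) (fun f hf hd => by
      rw [swap f]
      exact iSup_congr fun n => measure_iUnion hd hf) with hν
  refine le_antisymm ?_ (iSup_le fun n => Measure.le_iff'.1 (le_iSup μ n) s)
  have hub : (⨆ n, μ n) ≤ ν := by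
    refine iSup_le fun n => Measure.le_iff.2 fun t ht => ?_
    rw [hν, Measure.ofMeasurable_apply t ht]
    exact le_iSup (fun n => μ n t) n
  calc (⨆ n, μ n) s ≤ ν s := Measure.le_iff'.1 hub s
    _ = ⨆ n, μ n s := by rw [hν, Measure.ofMeasurable_apply s hs]

/-- Scott-topology convergence of probability measures gives eventual lower bounds on
measurable sets. -/
lemma gk_eventually {α : Type*} [MeasurableSpace α] [TopologicalSpace α]
    [OpensMeasurableSpace α] [HasOuterApproxClosed α]
    {μs : ℕ → ProbabilityMeasure α}
    {ν : ProbabilityMeasure α}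
    (h : Tendsto μs atTop (𝓝 ν))
    {s : Set α} (hs : IsOpen s) {c : ℝ≥0∞} (hc : c < (ν : Measure α) s) :
    ∀ᶠ k in atTop, c < (μs k : Measure α) s :=
  Filter.eventually_lt_of_lt_liminf
    (lt_of_lt_of_le hc (ProbabilityMeasure.le_liminf_measure_open_of_tendsto h hs))

/-- Gyöngy–Krylov criterion: let `X` be a Polish space and `(Xₙ)` a tight
sequence of `X`-valued random variables such that every pair of subsequences
`(X_{n_k}, X_{m_k})` admits a further subsequence whose joint laws converge
weakly to a probability measure supported on the diagonal of `X × X`.  Then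
`(Xₙ)` converges in probability to some `X`-valued random variable. -/
theorem gyongy_krylov_criterion
    {Ω : Type*} [MeasurableSpace Ω] (P : Measure Ω) [IsProbabilityMeasure P]
    {X : Type*} [MetricSpace X] [CompleteSpace X] [SecondCountableTopology X]
    [MeasurableSpace X] [BorelSpace X]
    (Xs : ℕ → Ω → X) (hmeas : ∀ n, Measurable (Xs n))
    (htight : ∀ ε : ℝ≥0∞, 0 < ε →
      ∃ K : Set X, IsCompact K ∧ ∀ n, P ((Xs n) ⁻¹' Kᶜ) ≤ ε)
    (hdiag : ∀ φ ψ : ℕ → ℕ, StrictMono φ → StrictMono ψ →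
      ∃ ρ : ℕ → ℕ, StrictMono ρ ∧
        ∃ ν : ProbabilityMeasure (X × X),
          ν {p : X × X | p.1 = p.2} = 1 ∧
          Tendsto (β := ProbabilityMeasure (X × X))
            (fun k => (⟨P.map (fun ω => (Xs (φ (ρ k)) ω, Xs (ψ (ρ k)) ω)),
              Measure.isProbabilityMeasure_map
                (((hmeas (φ (ρ k))).prodMk (hmeas (ψ (ρ k)))).aemeasurable)⟩ :
              ProbabilityMeasure (X × X)))
            atTop (𝓝 ν)) :
    ∃ Y : Ω → X, Measurable Y ∧
      ∀ ε : ℝ, 0 < ε →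
        Tendsto (fun n => P {ω | ε ≤ dist (Xs n ω) (Y ω)}) atTop (𝓝 0) := by
  classical
  -- Step 1: the sequence is Cauchy in probability.
  have hcauchy : ∀ ε : ℝ, 0 < ε → ∀ δ : ℝ≥0∞, 0 < δ →
      ∃ N : ℕ, ∀ n m, N ≤ n → N ≤ m →
        P {ω | ε ≤ dist (Xs n ω) (Xs m ω)} ≤ δ := by
    intro ε hε δ hδ
    by_contra hcon
    push_neg at hcon
    -- build strictly monotone subsequences witnessing failure
    have hstep : ∀ N : ℕ, ∃ p : ℕ × ℕ, N < p.1 ∧ N < p.2 ∧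
        δ < P {ω | ε ≤ dist (Xs p.1 ω) (Xs p.2 ω)} := by
      intro N
      obtain ⟨n, m, hn, hm, h⟩ := hcon (N + 1)
      exact ⟨(n, m), Nat.lt_of_succ_le hn, Nat.lt_of_succ_le hm, h⟩
    choose f hf1 hf2 hf3 using hstep
    let g : ℕ → ℕ × ℕ := fun k => Nat.rec (f 0) (fun _ p => f (max p.1 p.2)) k
    have hg : ∀ k, g (k + 1) = f (max (g k).1 (g k).2) := fun k => rfl
    have hφ : StrictMono (fun k => (g k).1) := by
      apply strictMono_nat_of_lt_succ
      intro k
      rw [hg]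
      exact lt_of_le_of_lt (le_max_left _ _) (hf1 _)
    have hψ : StrictMono (fun k => (g k).2) := by
      apply strictMono_nat_of_lt_succ
      intro k
      rw [hg]
      exact lt_of_le_of_lt (le_max_right _ _) (hf2 _)
    have hbig : ∀ k, δ < P {ω | ε ≤ dist (Xs (g k).1 ω) (Xs (g k).2 ω)} := by
      intro k
      cases k with
      | zero => exact hf3 0
      | succ k => rw [hg]; exact hf3 _
    obtain ⟨ρ, hρ, ν, hν, htend⟩ := hdiag _ _ hφ hψ
    -- closed set off the diagonal
    set C : Set (X × X) := {p : X × X | ε ≤ dist p.1 p.2} with hCdef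
    have hCclosed : IsClosed C := isClosed_le continuous_const continuous_dist
    have hDclosed : IsClosed {p : X × X | p.1 = p.2} :=
      isClosed_eq continuous_fst continuous_snd
    have hν1 : (ν : Measure (X × X)) {p : X × X | p.1 = p.2} = 1 := by
      have := congrArg (fun x : NNReal => (x : ℝ≥0∞)) hν
      simpa [ProbabilityMeasure.ennreal_coeFn_eq_coeFn_toMeasure] using this
    have hsubdiag : {p : X × X | p.1 = p.2} ⊆ Cᶜ := by
      intro p hpe
      simp only [Set.mem_setOf_eq] at hpe
      simp only [hCdef, Set.mem_compl_iff, Set.mem_setOf_eq, not_le, hpe, dist_self]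
      exact hε
    have hνCc : (ν : Measure (X × X)) Cᶜ = 1 :=
      le_antisymm prob_le_one (hν1 ▸ measure_mono hsubdiag)
    have hδ1 : δ ≤ 1 := le_trans (hbig 0).le prob_le_one
    have hc : (1 : ℝ≥0∞) - δ < (ν : Measure (X × X)) Cᶜ := by
      rw [hνCc]
      exact ENNReal.sub_lt_self ENNReal.one_ne_top one_ne_zero hδ.ne'
    have hev := gk_eventually htend hCclosed.isOpen_compl hc
    obtain ⟨k, hk⟩ := hev.exists
    set τ : Ω → X × X := fun ω => (Xs ((g (ρ k)).1) ω, Xs ((g (ρ k)).2) ω) with hτ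
    have hτmeas : Measurable τ := (hmeas _).prodMk (hmeas _)
    have hkC : δ < (P.map τ) C := by
      rw [Measure.map_apply hτmeas hCclosed.measurableSet]
      exact hbig (ρ k)
    have hkCc : (1 : ℝ≥0∞) - δ < (P.map τ) Cᶜ := hk
    have hlt : δ + ((1 : ℝ≥0∞) - δ) < (P.map τ) C + (P.map τ) Cᶜ :=
      ENNReal.add_lt_add hkC hkCc
    rw [add_tsub_cancel_of_le hδ1,
      measure_add_measure_compl hCclosed.measurableSet] at hlt
    have : IsProbabilityMeasure (P.map τ) :=
      Measure.isProbabilityMeasure_map hτmeas.aemeasurable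
    rw [measure_univ] at hlt
    exact lt_irrefl _ hlt
  -- Step 2  -- Step 2: extract an a.e. convergent subsequence.
  choose N hN using fun k : ℕ =>
    hcauchy ((1 / 2 : ℝ) ^ k) (by positivity) ((1 / 2 : ℝ≥0∞) ^ k)
      (by simp [ENNReal.pow_pos])
  let u : ℕ → ℕ := fun k => Nat.rec (N 0) (fun k p => max (N (k + 1)) (p + 1)) k
  have hu_succ : ∀ k, u (k + 1) = max (N (k + 1)) (u k + 1) := fun k => rfl
  have hu_mono : StrictMono u := by
    apply strictMono_nat_of_lt_succ
    intro k
    rw [hu_succ]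
    exact lt_of_lt_of_le (Nat.lt_succ_self _) (le_max_right _ _)
  have hu_ge : ∀ k, N k ≤ u k := by
    intro k
    cases k with
    | zero => exact le_rfl
    | succ k => rw [hu_succ]; exact le_max_left _ _
  set A : ℕ → Set Ω := fun k =>
    {ω | (1 / 2 : ℝ) ^ k ≤ dist (Xs (u k) ω) (Xs (u (k + 1)) ω)} with hA
  have hAk : ∀ k, P (A k) ≤ (1 / 2 : ℝ≥0∞) ^ k := by
    intro k
    exact hN k (u k) (u (k + 1)) (hu_ge k)
      ((hu_ge k).trans (hu_mono (Nat.lt_succ_self k)).le)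
  have hsum : ∑' k, P (A k) ≠ ∞ := by
    refine ne_top_of_le_ne_top ?_ (ENNReal.tsum_le_tsum hAk)
    rw [ENNReal.tsum_geometric]
    simp [ENNReal.sub_half]
  have hBC : P {ω | ∃ᶠ k in atTop, ω ∈ A k} = 0 :=
    measure_setOf_frequently_eq_zero hsum
  have hae : ∀ᵐ ω ∂P, ∃ l : X, Tendsto (fun k => Xs (u k) ω) atTop (𝓝 l) := by
    have h1 : ∀ᵐ ω ∂P, ¬ ∃ᶠ k in atTop, ω ∈ A k := by
      rw [ae_iff]
      have he : {a | ¬¬ ∃ᶠ k in atTop, a ∈ A k} = {ω | ∃ᶠ k in atTop, ω ∈ A k} := by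
        ext a; simp [not_not, Filter.frequently_atTop]
      rw [he]
      exact hBC
    filter_upwards [h1] with ω hω
    rw [Filter.not_frequently] at hω
    have hω' : ∀ᶠ k in atTop, ω ∉ A k := hω
    obtain ⟨K, hK⟩ := eventually_atTop.mp hω'
    have hsummable : Summable (fun k => dist (Xs (u k) ω) (Xs (u (k + 1)) ω)) := by
      rw [← summable_nat_add_iff K]
      refine Summable.of_nonneg_of_le (fun k => dist_nonneg) (fun k => ?_)
        (summable_geometric_two.comp_injective (add_left_injective K))
      have := hK (k + K) (Nat.le_add_left K k)
      rw [hA] at this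
      simp only [Set.mem_setOf_eq, not_le] at this
      exact this.le
    have hcs : CauchySeq (fun k => Xs (u k) ω) :=
      cauchySeq_of_summable_dist hsummable
    exact cauchySeq_tendsto_of_complete hcs
  obtain ⟨Y, hYmeas, hYtend⟩ :=
    measurable_limit_of_tendsto_metrizable_ae
      (fun k => (hmeas (u k)).aemeasurable) hae
  refine ⟨Y, hYmeas, ?_⟩
  -- Step 3: convergence in probability of the whole sequence to Y.
  have hsub : TendstoInMeasure P (fun k => Xs (u k)) atTop Y :=
    tendstoInMeasure_of_tendsto_ae
      (fun k => (hmeas (u k)).aestronglyMeasurable) hYtend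
  intro ε hε
  rw [ENNReal.tendsto_atTop_zero]
  intro δ hδ
  obtain ⟨N₁, hN₁⟩ := hcauchy (ε / 2) (half_pos hε) (δ / 2) (ENNReal.half_pos hδ.ne')
  have hsub2 : ∀ᶠ k in atTop, P {ω | ε / 2 ≤ dist (Xs (u k) ω) (Y ω)} ≤ δ / 2 := by
    have hset : ∀ k, {ω | ε / 2 ≤ dist (Xs (u k) ω) (Y ω)} =
        {ω | ENNReal.ofReal (ε / 2) ≤ edist (Xs (u k) ω) (Y ω)} := fun k => by
      ext ω; simp only [Set.mem_setOf_eq, edist_dist, ENNReal.ofReal_le_ofReal_iff dist_nonneg]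
    have := hsub (ENNReal.ofReal (ε / 2)) (ENNReal.ofReal_pos.2 (half_pos hε))
    rw [ENNReal.tendsto_atTop_zero] at this
    obtain ⟨K, hK⟩ := this (δ / 2) (ENNReal.half_pos hδ.ne')
    exact eventually_atTop.mpr ⟨K, fun k hk => by rw [hset k]; exact hK k hk⟩
  obtain ⟨K, hK⟩ := eventually_atTop.mp hsub2
  set k₀ := max K N₁ with hk₀
  refine ⟨N₁, fun n hn => ?_⟩
  have huk : N₁ ≤ u k₀ := le_trans (le_max_right K N₁) ((hu_mono.id_le) k₀)
  have hsubset : {ω | ε ≤ dist (Xs n ω) (Y ω)} ⊆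
      {ω | ε / 2 ≤ dist (Xs n ω) (Xs (u k₀) ω)} ∪
      {ω | ε / 2 ≤ dist (Xs (u k₀) ω) (Y ω)} := by
    intro ω hω
    simp only [Set.mem_setOf_eq, Set.mem_union] at *
    by_contra hcon
    push_neg at hcon
    have := dist_triangle (Xs n ω) (Xs (u k₀) ω) (Y ω)
    linarith [hcon.1, hcon.2]
  calc P {ω | ε ≤ dist (Xs n ω) (Y ω)}
      ≤ P ({ω | ε / 2 ≤ dist (Xs n ω) (Xs (u k₀) ω)} ∪
          {ω | ε / 2 ≤ dist (Xs (u k₀) ω) (Y ω)}) := measure_mono hsubset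
    _ ≤ P {ω | ε / 2 ≤ dist (Xs n ω) (Xs (u k₀) ω)} +
        P {ω | ε / 2 ≤ dist (Xs (u k₀) ω) (Y ω)} := measure_union_le _ _
    _ ≤ δ / 2 + δ / 2 :=
        add_le_add (hN₁ n (u k₀) hn huk) (hK k₀ (le_max_left K N₁))
    _ = δ := ENNReal.add_halves δ
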